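/- Let ξ_n = 2^{-n/2} Σ_{i=2^n}^{2^{n+1}-1} e_i for n ≥ 1, and let V be the unique bounded operator on ℓ²(ℕ) with V e_n = ξ_n for all n ≥ 1. If T is a bounded linear operator on ℓ²(ℕ) with ‖T − V‖ < 1/2, then for every n ≥ 1 one has Σ_{i=2^n}^{2^{n+1}-1} |⟨e_i, T e_n⟩| ≥ 2^{n/2}/2. -/

import Mathlib

open scoped ENNReal


noncomputable abbrev ellTwo : Type := lp (fun _ : ℕ => ℂ) 2

/-- The standard orthonormal basis vectors of ℓ²(ℕ). -/
noncomputable def e (n : ℕ) : ellTwo := lp.single 2 n (1 : ℂ)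

/-- `ξ n = 2^{-n/2} ∑_{i=2^n}^{2^{n+1}-1} e i`. -/
noncomputable def xiVec (n : ℕ) : ellTwo :=
  ((Real.sqrt (2 ^ n) : ℝ) : ℂ)⁻¹ • ∑ i ∈ Finset.Icc (2 ^ n) (2 ^ (n + 1) - 1), e i

lemma inner_e_left (i : ℕ) (f : ellTwo) : @inner ℂ _ _ (e i) f = f i := by
  rw [e, lp.inner_single_left]
  simp [RCLike.inner_apply]

lemma norm_e (i : ℕ) : ‖e i‖ = 1 := by
  have h : (0 : ℝ) < (2 : ℝ≥0∞).toReal := by norm_num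
  simpa [e] using lp.norm_single (E := fun _ : ℕ => ℂ) (p := 2) (by norm_num) i (1 : ℂ)

lemma xi_apply (n i : ℕ) (hi : i ∈ Finset.Icc (2 ^ n) (2 ^ (n + 1) - 1)) :
    (xiVec n : ∀ _ : ℕ, ℂ) i = ((Real.sqrt (2 ^ n) : ℝ) : ℂ)⁻¹ := by
  rw [xiVec, lp.coeFn_smul, Pi.smul_apply]
  have : ((∑ j ∈ Finset.Icc (2 ^ n) (2 ^ (n + 1) - 1), e j : ellTwo) : ∀ _ : ℕ, ℂ) i
      = ∑ j ∈ Finset.Icc (2 ^ n) (2 ^ (n + 1) - 1), (e j : ∀ _ : ℕ, ℂ) i := by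
    rw [lp.coeFn_sum, Finset.sum_apply]
  rw [this]
  have hsum : ∑ j ∈ Finset.Icc (2 ^ n) (2 ^ (n + 1) - 1), (e j : ∀ _ : ℕ, ℂ) i = 1 := by
    rw [Finset.sum_eq_single_of_mem i hi]
    · simp [e, lp.single_apply_self]
    · intro j _ hj
      simp [e, lp.single_apply_ne 2 j _ (Ne.symm hj), Pi.single_eq_of_ne (Ne.symm hj)]
  rw [hsum, smul_eq_mul, mul_one]

/-- if `V` is a bounded operator on ℓ²(ℕ) with `V eₙ = ξₙ` for all `n ≥ 1`,
and `T` is a bounded operator with `‖T − V‖ < 1/2`, then for every `n ≥ 1` one has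
`∑_{i=2^n}^{2^{n+1}-1} |⟨eᵢ, T eₙ⟩| ≥ 2^{n/2}/2`. -/
theorem stmt2 (V T : ellTwo →L[ℂ] ellTwo)
    (hV : ∀ n : ℕ, 1 ≤ n → V (e n) = xiVec n)
    (hTV : ‖T - V‖ < 1 / 2) :
    ∀ n : ℕ, 1 ≤ n →
      Real.sqrt (2 ^ n) / 2 ≤
        ∑ i ∈ Finset.Icc (2 ^ n) (2 ^ (n + 1) - 1), ‖@inner ℂ _ _ (e i) (T (e n))‖ := by
  intro n hn
  set s := Finset.Icc (2 ^ n) (2 ^ (n + 1) - 1) with hs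
  have hpow : (2 : ℕ) ^ (n + 1) = 2 * 2 ^ n := by ring
  have hcard : s.card = 2 ^ n := by
    rw [hs, Nat.card_Icc]
    have h1 : 1 ≤ (2 : ℕ) ^ (n + 1) := Nat.one_le_two_pow
    omega
  set w : ellTwo := (T - V) (e n) with hw
  have hwnorm : ‖w‖ ≤ 1 / 2 := by
    calc ‖w‖ ≤ ‖T - V‖ * ‖e n‖ := (T - V).le_opNorm _
    _ = ‖T - V‖ := by rw [norm_e, mul_one]
    _ ≤ 1 / 2 := le_of_lt hTV
  have hsq : (0 : ℝ) < Real.sqrt (2 ^ n) := Real.sqrt_pos.2 (by positivity)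
  set c : ℝ := (Real.sqrt (2 ^ n))⁻¹ with hc
  have hcpos : 0 < c := inv_pos.2 hsq
  -- pointwise lower bound
  have hpt : ∀ i ∈ s, c - ‖w i‖ ≤ ‖@inner ℂ _ _ (e i) (T (e n))‖ := by
    intro i hi
    have hT : T (e n) = xiVec n + w := by
      rw [hw]
      simp [hV n hn]
    have hinner : @inner ℂ _ _ (e i) (T (e n)) = ((c : ℝ) : ℂ) + w i := by
      rw [hT, inner_e_left]
      have : ((xiVec n + w : ellTwo) : ∀ _ : ℕ, ℂ) i = (xiVec n : ∀ _ : ℕ, ℂ) i + w i := by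
        rw [lp.coeFn_add, Pi.add_apply]
      rw [this, xi_apply n i hi, hc]
      push_cast
      ring_nf
    rw [hinner]
    have h1 : ‖((c : ℝ) : ℂ)‖ = c := by
      rw [Complex.norm_real, Real.norm_eq_abs, abs_of_pos hcpos]
    calc c - ‖w i‖ = ‖((c : ℝ) : ℂ)‖ - ‖-(w i)‖ := by rw [h1, norm_neg]
    _ ≤ ‖((c : ℝ) : ℂ) - -(w i)‖ := norm_sub_norm_le _ _
    _ = ‖((c : ℝ) : ℂ) + w i‖ := by rw [sub_neg_eq_add]
  -- Cauchy–Schwarz bound for ∑ ‖w i‖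
  have hCS : ∑ i ∈ s, ‖w i‖ ≤ Real.sqrt (2 ^ n) * (1 / 2) := by
    have h1 : ∑ i ∈ s, ‖w i‖ = ∑ i ∈ s, (1 : ℝ) * ‖w i‖ := by simp
    have h2 := Real.sum_mul_le_sqrt_mul_sqrt s (fun _ => (1 : ℝ)) (fun i => ‖w i‖)
    have h3 : ∑ i ∈ s, (1 : ℝ) ^ 2 = (2 : ℝ) ^ n := by
      simp [hcard]
    have h4 : Real.sqrt (∑ i ∈ s, ‖w i‖ ^ 2) ≤ 1 / 2 := by
      have h5 : ∑ i ∈ s, ‖w i‖ ^ 2 ≤ ‖w‖ ^ 2 := by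
        have := lp.sum_rpow_le_norm_rpow (p := 2)
          (E := fun _ : ℕ => ℂ) (by norm_num) w s
        have ht : (2 : ℝ≥0∞).toReal = (2 : ℝ) := by norm_num
        rw [ht] at this
        convert this using 2 with i
        · rw [← Real.rpow_natCast ‖w i‖ 2]; norm_num
        · rw [← Real.rpow_natCast ‖w‖ 2]; norm_num
      calc Real.sqrt (∑ i ∈ s, ‖w i‖ ^ 2) ≤ Real.sqrt (‖w‖ ^ 2) :=
            Real.sqrt_le_sqrt h5
      _ = ‖w‖ := by rw [Real.sqrt_sq (norm_nonneg _)]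
      _ ≤ 1 / 2 := hwnorm
    calc ∑ i ∈ s, ‖w i‖ = ∑ i ∈ s, (1 : ℝ) * ‖w i‖ := h1
    _ ≤ Real.sqrt (∑ i ∈ s, (1:ℝ) ^ 2) * Real.sqrt (∑ i ∈ s, ‖w i‖ ^ 2) := h2
    _ ≤ Real.sqrt ((2:ℝ) ^ n) * (1 / 2) := by
        rw [h3]
        exact mul_le_mul_of_nonneg_left h4 (Real.sqrt_nonneg _)
  -- main chain
  have hmain : ∑ i ∈ s, (c - ‖w i‖) ≤ ∑ i ∈ s, ‖@inner ℂ _ _ (e i) (T (e n))‖ :=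
    Finset.sum_le_sum hpt
  have hsumc : ∑ i ∈ s, (c - ‖w i‖) = (2 : ℝ) ^ n * c - ∑ i ∈ s, ‖w i‖ := by
    rw [Finset.sum_sub_distrib, Finset.sum_const, hcard, nsmul_eq_mul]
    push_cast
    ring
  have hnc : (2 : ℝ) ^ n * c = Real.sqrt (2 ^ n) := by
    rw [hc, ← div_eq_mul_inv, Real.div_sqrt]
  have : Real.sqrt (2 ^ n) / 2 ≤ ∑ i ∈ s, (c - ‖w i‖) := by
    rw [hsumc, hnc]
    have := hCS
    linarith
  exact this.trans hmain
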